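/- Let S' be the set of all x ∈ F that have at least one base-b expansion (with digits in A) that is infinitely de Bruijn. Then dim_H(S') ≤ log(k!)/(k·log b) = (log(k!)/(k·log k))·δ, where δ = log k / log b. Since log(k!) < k·log k for all k ≥ 2, this is strictly less than δ. -/

import Mathlib

/-- The real number in `[0,1]` whose base-`b` digit sequence is `ω` (so that
`ω 0` is the first digit after the point). -/
noncomputable def baseVal (b : ℕ) (ω : ℕ → ℕ) : ℝ :=
  ∑' i : ℕ, (ω i : ℝ) / (b : ℝ) ^ (i + 1)

/-- The initial segment of `ω` of length `A.card ^ n + n - 1` is a (non-cyclic)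
de Bruijn sequence of order `n` in the alphabet `A`: every word of length `n`
over `A` occurs exactly once as a consecutive substring of that initial segment. -/
def dbPrefix (A : Finset ℕ) (n : ℕ) (ω : ℕ → ℕ) : Prop :=
  ∀ v : ℕ → ℕ, (∀ i < n, v i ∈ A) →
    ∃! j : ℕ, j + n ≤ A.card ^ n + n - 1 ∧ ∀ i < n, ω (j + i) = v i

/-- `B_ω`, the set of orders `n ≥ 1` for which the corresponding initial segment of `ω`
is a de Bruijn sequence of order `n`. -/
def deBruijnSet (A : Finset ℕ) (ω : ℕ → ℕ) : Set ℕ :=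
  {n | 0 < n ∧ dbPrefix A n ω}

/-- `ω` is uniformly de Bruijn: `B_ω` is infinite with bounded gap sizes. -/
def UniformlyDeBruijn (A : Finset ℕ) (ω : ℕ → ℕ) : Prop :=
  ∃ g : ℕ, ∀ N : ℕ, ∃ n ∈ deBruijnSet A ω, N < n ∧ n ≤ N + g

/-- `ω` is infinitely de Bruijn: `B_ω` is infinite. -/
def InfinitelyDeBruijn (A : Finset ℕ) (ω : ℕ → ℕ) : Prop :=
  (deBruijnSet A ω).Infinite

/-- `ω` is totally de Bruijn: `B_ω` contains every `n ≥ 1`. -/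
def TotallyDeBruijn (A : Finset ℕ) (ω : ℕ → ℕ) : Prop :=
  ∀ n : ℕ, 0 < n → dbPrefix A n ω

/-- The limit set `F` of the base-`b` IFS with digit alphabet `A`: all reals having at
least one base-`b` expansion with all digits in `A`. -/
def limitSet (b : ℕ) (A : Finset ℕ) : Set ℝ :=
  {x | ∃ ω : ℕ → ℕ, (∀ i, ω i ∈ A) ∧ x = baseVal b ω}


namespace DBAux



noncomputable def cval (b l : ℕ) (ω : ℕ → ℕ) : ℝ :=
  ∑ i ∈ Finset.range l, (ω i : ℝ) / (b : ℝ) ^ (i + 1)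

def cyl (b l : ℕ) (ω : ℕ → ℕ) : Set ℝ :=
  Set.Icc (cval b l ω) (cval b l ω + ((b : ℝ)⁻¹) ^ l)

lemma cval_congr {b l : ℕ} {ω ω' : ℕ → ℕ} (h : ∀ i < l, ω i = ω' i) :
    cval b l ω = cval b l ω' := by
  unfold cval
  refine Finset.sum_congr rfl fun i hi => ?_
  rw [h i (Finset.mem_range.mp hi)]

lemma summable_digits {b : ℕ} (hb : 2 ≤ b) {ω : ℕ → ℕ} (hω : ∀ i, ω i < b) :
    Summable (fun i : ℕ => (ω i : ℝ) / (b : ℝ) ^ (i + 1)) := by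
  have hb1 : (1 : ℝ) < b := by exact_mod_cast hb.trans_lt' one_lt_two
  have hb0 : (0 : ℝ) < b := by linarith
  have hgeo : Summable (fun i : ℕ => (b : ℝ) * ((b : ℝ)⁻¹) ^ (i + 1)) := by
    apply Summable.mul_left
    exact (summable_geometric_of_lt_one (by positivity) (by
      rw [inv_lt_one_iff₀]; right; exact hb1)).comp_injective (add_left_injective 1)
  refine Summable.of_nonneg_of_le (fun i => by positivity) (fun i => ?_) hgeo
  rw [div_eq_mul_inv, ← inv_pow]
  have : (ω i : ℝ) ≤ b := by exact_mod_cast (hω i).le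
  apply mul_le_mul this le_rfl (by positivity) hb0.le

lemma baseVal_mem_cyl {b : ℕ} (hb : 2 ≤ b) {ω : ℕ → ℕ} (hω : ∀ i, ω i < b) (l : ℕ) :
    baseVal b ω ∈ cyl b l ω := by
  have hb1 : (1 : ℝ) < b := by exact_mod_cast hb.trans_lt' one_lt_two
  have hb0 : (0 : ℝ) < b := by linarith
  have hinv : (b : ℝ)⁻¹ < 1 := by rw [inv_lt_one_iff₀]; right; exact hb1
  have hs := summable_digits hb hω
  have hsplit : cval b l ω + (∑' i : ℕ, (ω (i + l) : ℝ) / (b : ℝ) ^ (i + l + 1))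
      = baseVal b ω := Summable.sum_add_tsum_nat_add l hs
  have htail0 : 0 ≤ ∑' i : ℕ, (ω (i + l) : ℝ) / (b : ℝ) ^ (i + l + 1) :=
    tsum_nonneg fun i => by positivity
  have htail : (∑' i : ℕ, (ω (i + l) : ℝ) / (b : ℝ) ^ (i + l + 1)) ≤ ((b : ℝ)⁻¹) ^ l := by
    have hgs : Summable (fun i : ℕ => ((b : ℝ) - 1) * (((b : ℝ)⁻¹) ^ (i + (l + 1)))) := by
      apply Summable.mul_left
      exact (summable_geometric_of_lt_one (by positivity) hinv).comp_injective
        (add_left_injective (l + 1))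
    have hle : ∀ i : ℕ, (ω (i + l) : ℝ) / (b : ℝ) ^ (i + l + 1)
        ≤ ((b : ℝ) - 1) * (((b : ℝ)⁻¹) ^ (i + (l + 1))) := by
      intro i
      rw [div_eq_mul_inv, ← inv_pow]
      have h1 : (ω (i + l) : ℝ) ≤ (b : ℝ) - 1 := by
        have h' : ω (i + l) + 1 ≤ b := hω (i + l)
        have : ((ω (i + l) : ℝ) + 1) ≤ (b : ℝ) := by exact_mod_cast h'
        linarith
      have : i + l + 1 = i + (l + 1) := by ring
      rw [this]
      exact mul_le_mul_of_nonneg_right h1 (by positivity)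
    calc (∑' i : ℕ, (ω (i + l) : ℝ) / (b : ℝ) ^ (i + l + 1))
        ≤ ∑' i : ℕ, ((b : ℝ) - 1) * (((b : ℝ)⁻¹) ^ (i + (l + 1))) := by
          refine Summable.tsum_le_tsum hle ?_ hgs
          exact (hs.comp_injective (add_left_injective l)).congr (fun i => rfl)
      _ = ((b : ℝ)⁻¹) ^ l := by
          have hg : ∑' i : ℕ, (((b : ℝ)⁻¹) ^ (i + (l + 1)))
              = (1 - (b : ℝ)⁻¹)⁻¹ * ((b : ℝ)⁻¹) ^ (l + 1) := by
            simp only [pow_add]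
            rw [tsum_mul_right, tsum_geometric_of_lt_one (by positivity) hinv]
          rw [tsum_mul_left, hg]
          have hbne : (b : ℝ) ≠ 0 := ne_of_gt hb0
          have hb1ne : (b : ℝ) - 1 ≠ 0 := by linarith
          field_simp
          ring_nf
          field_simp
  constructor
  · linarith
  · linarith


lemma factorial_lt_pow {k : ℕ} (hk2 : 2 ≤ k) : k.factorial < k ^ k := by
  have h0 : 0 < k := by omega
  have h1 : k.factorial = k * (k - 1).factorial := (Nat.mul_factorial_pred h0.ne').symm
  have h2 : (k - 1).factorial ≤ (k - 1) ^ (k - 1) := Nat.factorial_le_pow _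
  have h3 : (k - 1) ^ (k - 1) < k ^ (k - 1) :=
    Nat.pow_lt_pow_left (by omega) (by omega)
  calc k.factorial = k * (k - 1).factorial := h1
    _ ≤ k * (k - 1) ^ (k - 1) := Nat.mul_le_mul_left _ h2
    _ < k * k ^ (k - 1) := Nat.mul_lt_mul_of_le_of_lt le_rfl h3 h0
    _ = k ^ k := by
        have h : k - 1 + 1 = k := by omega
        calc k * k ^ (k - 1) = k ^ (k - 1 + 1) := (pow_succ' k (k - 1)).symm
          _ = k ^ k := by rw [h]

lemma parts23 {b k : ℕ} (hb : 2 ≤ b) (hk2 : 2 ≤ k) :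
    Real.log (Nat.factorial k) / (k * Real.log b)
        = Real.log (Nat.factorial k) / (k * Real.log k) * (Real.log k / Real.log b) ∧
      Real.log (Nat.factorial k) / (k * Real.log b) < Real.log k / Real.log b := by
  have hlogb : 0 < Real.log b := Real.log_pos (by exact_mod_cast hb.trans_lt' one_lt_two)
  have hlogk : 0 < Real.log k := Real.log_pos (by exact_mod_cast hk2.trans_lt' one_lt_two)
  have hk0 : (0 : ℝ) < k := by positivity
  constructor
  · field_simp
  · rw [div_lt_div_iff₀ (by positivity) hlogb]
    have hfl : Real.log (Nat.factorial k) < k * Real.log k := by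
      have h1 : (Nat.factorial k : ℝ) < (k : ℝ) ^ k := by
        exact_mod_cast factorial_lt_pow hk2
      have := Real.log_lt_log (by positivity) h1
      rw [Real.log_pow] at this; linarith
      -- log_pow : log (x ^ n) = n * log x
    calc Real.log (Nat.factorial k) * Real.log b
        < (k * Real.log k) * Real.log b := by
          exact mul_lt_mul_of_pos_right hfl hlogb
      _ = Real.log k * (k * Real.log b) := by ring




/-- extend a finite word to an infinite one by zeros -/
def wext {b L : ℕ} (w : Fin L → Fin b) : ℕ → ℕ := fun i => if h : i < L then (w ⟨i, h⟩ : ℕ) else 0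

def isDBW (A : Finset ℕ) (n : ℕ) (ω : ℕ → ℕ) : Prop :=
  (∀ i < A.card ^ n + n - 1, ω i ∈ A) ∧ dbPrefix A n ω

/-- positions `< A.card ^ n` where the `(n-1)`-word `u` occurs in `ω` -/
def occ (A : Finset ℕ) (n : ℕ) (ω u : ℕ → ℕ) : Finset ℕ :=
  (Finset.range (A.card ^ n)).filter fun p => ∀ i < n - 1, ω (p + i) = u i

lemma mem_occ {A : Finset ℕ} {n : ℕ} {ω u : ℕ → ℕ} {p : ℕ} :
    p ∈ occ A n ω u ↔ p < A.card ^ n ∧ ∀ i < n - 1, ω (p + i) = u i := by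
  simp [occ]

section OccCard

variable {A : Finset ℕ} {n : ℕ} {ω u : ℕ → ℕ}

/-- the `n`-letter word whose first `n-1` letters are those of `u` and whose last is `a` -/
def vw (u : ℕ → ℕ) (a : ℕ) (n : ℕ) : ℕ → ℕ := fun i => if i = n - 1 then a else u i

lemma vw_mem {a : ℕ} (hn : 0 < n) (hu : ∀ i < n - 1, u i ∈ A) (ha : a ∈ A) :
    ∀ i < n, vw u a n i ∈ A := by
  intro i hi
  by_cases h : i = n - 1
  · simp [vw, h, ha]
  · simp only [vw, if_neg h]
    exact hu i (by omega)

lemma occ_window {a : ℕ} (hn : 0 < n) {p : ℕ} (hp : p ∈ occ A n ω u)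
    (hpa : ω (p + (n - 1)) = a) : ∀ i < n, ω (p + i) = vw u a n i := by
  intro i hi
  by_cases h : i = n - 1
  · simp [vw, h, hpa]
  · simp only [vw, if_neg h]
    exact (mem_occ.mp hp).2 i (by omega)

lemma occ_maps (hk2 : 2 ≤ A.card) (hn : 0 < n) (hω : isDBW A n ω)
    {p : ℕ} (hp : p ∈ occ A n ω u) : ω (p + (n - 1)) ∈ A := by
  have hpow : 0 < A.card ^ n := by positivity
  have := (mem_occ.mp hp).1
  exact hω.1 _ (by omega)

lemma occ_inj (hk2 : 2 ≤ A.card) (hn : 0 < n) (hω : isDBW A n ω)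
    (hu : ∀ i < n - 1, u i ∈ A) :
    ∀ p ∈ occ A n ω u, ∀ p' ∈ occ A n ω u,
      ω (p + (n - 1)) = ω (p' + (n - 1)) → p = p' := by
  have hpow : 0 < A.card ^ n := by positivity
  intro p hp p' hp' hpp
  set a := ω (p + (n - 1)) with ha
  obtain ⟨j, _, hjq⟩ := hω.2 (vw u a n) (vw_mem hn hu (occ_maps hk2 hn hω hp))
  have h1 : p = j := hjq p ⟨by have := (mem_occ.mp hp).1; omega, occ_window hn hp rfl⟩
  have h2 : p' = j := hjq p' ⟨by have := (mem_occ.mp hp').1; omega, occ_window hn hp' hpp.symm⟩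
  omega

lemma occ_surj (hk2 : 2 ≤ A.card) (hn : 0 < n) (hω : isDBW A n ω)
    (hu : ∀ i < n - 1, u i ∈ A) :
    ∀ a ∈ A, ∃ p ∈ occ A n ω u, ω (p + (n - 1)) = a := by
  have hpow : 0 < A.card ^ n := by positivity
  intro a ha
  obtain ⟨j, ⟨hj1, hj2⟩, _⟩ := hω.2 (vw u a n) (vw_mem hn hu ha)
  refine ⟨j, mem_occ.mpr ⟨by omega, fun i hi => ?_⟩, ?_⟩
  · rw [hj2 i (by omega)]
    simp only [vw, if_neg (by omega : ¬ i = n - 1)]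
  · rw [hj2 (n - 1) (by omega)]
    simp [vw]

lemma occ_card (hk2 : 2 ≤ A.card) (hn : 0 < n) (hω : isDBW A n ω)
    (hu : ∀ i < n - 1, u i ∈ A) : (occ A n ω u).card = A.card :=
  Finset.card_nbij (fun p => ω (p + (n - 1)))
    (fun p hp => occ_maps hk2 hn hω hp)
    (fun p hp p' hp' h => occ_inj hk2 hn hω hu p hp p' hp' h)
    (by
      intro a ha
      obtain ⟨p, hp, hpa⟩ := occ_surj hk2 hn hω hu a ha
      exact ⟨p, hp, hpa⟩)

end OccCard

/-- index of `p` in the sorted order of `s` -/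
lemma orderEmbOfFin_idx {k : ℕ} {s : Finset ℕ} (hs : s.card = k) {p : ℕ} (hp : p ∈ s)
    (hlt : (s.filter (· < p)).card < k) :
    s.orderEmbOfFin hs ⟨(s.filter (· < p)).card, hlt⟩ = p := by
  set f := s.orderIsoOfFin hs with hf
  set j := f.symm ⟨p, hp⟩ with hj
  have hidx : (s.filter (· < p)).card = (j : ℕ) := by
    have himg : s.filter (· < p)
        = (Finset.univ.filter (· < j)).image (fun i => ((f i : s) : ℕ)) := by
      ext q
      simp only [Finset.mem_filter, Finset.mem_image, Finset.mem_univ, true_and]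
      constructor
      · rintro ⟨hq, hqp⟩
        refine ⟨f.symm ⟨q, hq⟩, ?_, by simp⟩
        rw [hj]
        exact f.symm.lt_iff_lt.mpr (Subtype.mk_lt_mk.mpr hqp)
      · rintro ⟨i, hij, rfl⟩
        refine ⟨(f i).2, ?_⟩
        have : f i < f j := f.lt_iff_lt.mpr hij
        have : ((f i : s) : ℕ) < ((f j : s) : ℕ) := this
        simpa [hj] using this
    rw [himg, Finset.card_image_of_injective _
      (show Function.Injective (fun i => ((f i : s) : ℕ)) from
        fun i i' h => f.injective (Subtype.val_injective h))]
    have : (Finset.univ.filter (· < j)) = Finset.Iio j := by ext i; simp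
    rw [this, Fin.card_Iio]
  have hje : (⟨(s.filter (· < p)).card, hlt⟩ : Fin k) = j := Fin.ext hidx
  rw [hje]
  have := s.coe_orderIsoOfFin_apply hs j
  rw [← this, hj]
  rw [← hf]
  simp



variable {A : Finset ℕ} {n : ℕ}

/-- the word over `A` of length `n-1` given by `u`, extended by `0` -/
def uval {A : Finset ℕ} {n : ℕ} (u : Fin (n - 1) → {a // a ∈ A}) : ℕ → ℕ :=
  fun i => if h : i < n - 1 then (u ⟨i, h⟩ : ℕ) else 0

lemma uval_mem (u : Fin (n - 1) → {a // a ∈ A}) : ∀ i < n - 1, uval u i ∈ A := by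
  intro i hi
  simp only [uval, dif_pos hi]
  exact (u ⟨i, hi⟩).2

/-- the permutation of `A` of successors of occurrences of `u` -/
noncomputable def succEmb (hk2 : 2 ≤ A.card) (hn : 0 < n) {ω : ℕ → ℕ} (hω : isDBW A n ω)
    (u : Fin (n - 1) → {a // a ∈ A}) : Fin A.card ↪ {a // a ∈ A} where
  toFun j := ⟨ω ((occ A n ω (uval u)).orderEmbOfFin
      (occ_card hk2 hn hω (uval_mem u)) j + (n - 1)),
    occ_maps hk2 hn hω (Finset.orderEmbOfFin_mem _ _ _)⟩
  inj' := by
    intro j j' h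
    rw [Subtype.mk.injEq] at h
    have := occ_inj hk2 hn hω (uval_mem u) _ (Finset.orderEmbOfFin_mem _ _ _)
      _ (Finset.orderEmbOfFin_mem _ _ _) h
    exact ((occ A n ω (uval u)).orderEmbOfFin _).injective this

lemma succEmb_apply (hk2 : 2 ≤ A.card) (hn : 0 < n) {ω : ℕ → ℕ} (hω : isDBW A n ω)
    (u : Fin (n - 1) → {a // a ∈ A}) (j : Fin A.card) :
    (succEmb hk2 hn hω u j : ℕ)
      = ω ((occ A n ω (uval u)).orderEmbOfFin (occ_card hk2 hn hω (uval_mem u)) j + (n - 1)) :=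
  rfl

/-- the encoding map -/
noncomputable def encode (hk2 : 2 ≤ A.card) (hn : 0 < n) {b : ℕ}
    (w : {w : Fin (A.card ^ n + n - 1) → Fin b // isDBW A n (wext w)}) :
    (Fin (n - 1) → {a // a ∈ A}) ×
      ((Fin (n - 1) → {a // a ∈ A}) → (Fin A.card ↪ {a // a ∈ A})) :=
  ⟨fun i => ⟨wext w.1 i, w.2.1 i (by
      have hpow : 0 < A.card ^ n := by positivity
      have := i.2; omega)⟩,
   fun u => succEmb hk2 hn w.2 u⟩

lemma encode_injective (hk2 : 2 ≤ A.card) (hn : 0 < n) (b : ℕ) :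
    Function.Injective (encode (A := A) (n := n) hk2 hn (b := b)) := by
  have hpow : 0 < A.card ^ n := by positivity
  intro w w' h
  set ω := wext w.1 with hom
  set ω' := wext w'.1 with hom'
  have key : ∀ m, m < A.card ^ n + n - 1 → ω m = ω' m := by
    intro m
    induction m using Nat.strong_induction_on with
    | _ m IH =>
      intro hmL
      by_cases hmn : m < n - 1
      · exact congrArg Subtype.val (congrFun (congrArg Prod.fst h) ⟨m, hmn⟩)
      · -- m ≥ n - 1
        set p := m - (n - 1) with hp
        have hpm : p + (n - 1) = m := by omega
        have hpkn : p < A.card ^ n := by omega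
        -- the (n-1)-word at p
        have humem : ∀ i : Fin (n - 1), ω (p + i) ∈ A := by
          intro i
          exact w.2.1 _ (by have := i.2; omega)
        set u : Fin (n - 1) → {a // a ∈ A} := fun i => ⟨ω (p + i), humem i⟩ with hu
        have hIHi : ∀ i < n - 1, ω (p + i) = ω' (p + i) := by
          intro i hi
          exact IH (p + i) (by omega) (by omega)
        have huv : ∀ i < n - 1, ω (p + i) = uval u i := by
          intro i hi
          simp [uval, dif_pos hi, hu]
        have huv' : ∀ i < n - 1, ω' (p + i) = uval u i := by
          intro i hi
          rw [← hIHi i hi]; exact huv i hi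
        have hpocc : p ∈ occ A n ω (uval u) := mem_occ.mpr ⟨hpkn, huv⟩
        have hpocc' : p ∈ occ A n ω' (uval u) := mem_occ.mpr ⟨hpkn, huv'⟩
        -- the filters below p agree
        have hfilt : (occ A n ω (uval u)).filter (· < p)
            = (occ A n ω' (uval u)).filter (· < p) := by
          ext q
          simp only [Finset.mem_filter, mem_occ]
          constructor
          · rintro ⟨⟨hq1, hq2⟩, hq3⟩
            exact ⟨⟨hq1, fun i hi => by
              rw [← IH (q + i) (by omega) (by omega)]; exact hq2 i hi⟩, hq3⟩
          · rintro ⟨⟨hq1, hq2⟩, hq3⟩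
            exact ⟨⟨hq1, fun i hi => by
              rw [IH (q + i) (by omega) (by omega)]; exact hq2 i hi⟩, hq3⟩
        have hcard := occ_card hk2 hn w.2 (uval_mem u)
        have hcard' := occ_card hk2 hn w'.2 (uval_mem u)
        have hlt : ((occ A n ω (uval u)).filter (· < p)).card < A.card := by
          rw [← hcard]
          apply Finset.card_lt_card
          constructor
          · exact Finset.filter_subset _ _
          · intro hsub
            have := hsub hpocc
            simp only [Finset.mem_filter] at this
            omega
        have hlt' : ((occ A n ω' (uval u)).filter (· < p)).card < A.card := by
          rw [← hfilt]; exact hlt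
        set j : Fin A.card := ⟨((occ A n ω (uval u)).filter (· < p)).card, hlt⟩ with hjdef
        have hemb : (occ A n ω (uval u)).orderEmbOfFin hcard j = p :=
          orderEmbOfFin_idx hcard hpocc hlt
        have hemb' : (occ A n ω' (uval u)).orderEmbOfFin hcard' j = p := by
          have hj2 : j = ⟨((occ A n ω' (uval u)).filter (· < p)).card, hlt'⟩ := by
            apply Fin.ext; simp [hjdef, hfilt]
          rw [hj2]
          exact orderEmbOfFin_idx hcard' hpocc' hlt'
        have h2 := congrFun (congrArg Prod.snd h) u
        have h3 : ω ((occ A n ω (uval u)).orderEmbOfFin hcard j + (n - 1))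
            = ω' ((occ A n ω' (uval u)).orderEmbOfFin hcard' j + (n - 1)) :=
          congrArg Subtype.val (congrFun (congrArg DFunLike.coe h2) j)
        rw [hemb, hemb'] at h3
        rw [← hpm]
        exact h3
  apply Subtype.ext
  funext i
  have hiL : (i : ℕ) < A.card ^ n + n - 1 := i.2
  have h1 : ω i = ω' i := key i hiL
  simp only [hom, hom', wext, dif_pos hiL] at h1
  exact Fin.ext h1

lemma count_le (hk2 : 2 ≤ A.card) (hn : 0 < n) (b : ℕ) :
    Nat.card {w : Fin (A.card ^ n + n - 1) → Fin b // isDBW A n (wext w)}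
      ≤ A.card ^ (n - 1) * (A.card.factorial) ^ (A.card ^ (n - 1)) := by
  classical
  have h := Nat.card_le_card_of_injective _ (encode_injective hk2 hn b)
  refine h.trans ?_
  rw [Nat.card_eq_fintype_card]
  rw [Fintype.card_prod, Fintype.card_fun, Fintype.card_fun,
    Fintype.card_embedding_eq, Fintype.card_coe, Fintype.card_fin]
  simp [Nat.descFactorial_self]



lemma M_le_pow {K M : ℕ} (hk2 : 2 ≤ K) (hM : 1 ≤ M) : M ≤ K ^ (M - 1) := by
  have h1 : M - 1 < 2 ^ (M - 1) := Nat.lt_two_pow_self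
  have h2 : 2 ^ (M - 1) ≤ K ^ (M - 1) := Nat.pow_le_pow_left hk2 _
  omega

lemma summable_g {K b : ℕ} (hk2 : 2 ≤ K) (hb : 2 ≤ b) {d : ℝ}
    (hd : Real.log (K.factorial) / (K * Real.log b) < d) :
    Summable (fun M : ℕ =>
      ((K ^ (M - 1) * (K.factorial) ^ (K ^ (M - 1)) : ℕ) : ℝ)
        * ((b : ℝ)⁻¹ ^ (K ^ M + M - 1)) ^ d) := by
  set g := fun M : ℕ =>
      ((K ^ (M - 1) * (K.factorial) ^ (K ^ (M - 1)) : ℕ) : ℝ)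
        * ((b : ℝ)⁻¹ ^ (K ^ M + M - 1)) ^ d with hg
  have hb1 : (1 : ℝ) < b := by exact_mod_cast hb.trans_lt' one_lt_two
  have hb0 : (0 : ℝ) < b := by linarith
  have hlogb : 0 < Real.log b := Real.log_pos hb1
  have hK0 : (0 : ℝ) < K := by positivity
  have hfact1 : 1 < K.factorial := Nat.one_lt_factorial.mpr hk2
  have hlogf : 0 < Real.log (K.factorial) := by
    apply Real.log_pos; exact_mod_cast hfact1
  have hd0 : 0 < d := lt_trans (by positivity) hd
  set η := d * (K * Real.log b) - Real.log (K.factorial) with hη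
  have hηpos : 0 < η := by
    rw [hη, sub_pos]
    rw [div_lt_iff₀ (by positivity)] at hd
    linarith
  -- pointwise bound for M ≥ 1 : g M ≤ (2/η) * (exp (-(η/2)))^M
  have hbound : ∀ M : ℕ, 1 ≤ M → g M ≤ (2 / η) * (Real.exp (-(η / 2))) ^ M := by
    intro M hM
    have hx0 : (0 : ℝ) < (K : ℝ) ^ (M - 1) := by positivity
    set x := (K : ℝ) ^ (M - 1) with hx
    set L := K ^ M + M - 1 with hL
    -- rewrite g M
    have hE : ((b : ℝ)⁻¹ ^ L) ^ d = Real.exp (-((L : ℝ) * Real.log b * d)) := by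
      rw [Real.rpow_def_of_pos (by positivity)]
      congr 1
      rw [Real.log_pow, Real.log_inv]
      ring
    have hN2 : ((K.factorial : ℝ)) ^ (K ^ (M - 1)) =
        Real.exp (x * Real.log (K.factorial)) := by
      rw [← Real.exp_log (show (0:ℝ) < (K.factorial : ℝ) ^ (K ^ (M - 1)) by positivity),
        Real.log_pow]
      congr 1
      rw [hx]
      push_cast
      ring
    have hgM : g M = x * Real.exp (x * Real.log (K.factorial)
        - (L : ℝ) * Real.log b * d) := by
      rw [hg]
      push_cast
      rw [hE, hN2, sub_eq_add_neg, Real.exp_add, hx]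
      push_cast
      ring
    -- exponent bound
    have hLge : (K ^ M : ℝ) ≤ (L : ℝ) := by
      have : K ^ M ≤ L := by
        have : 0 < K ^ M := by positivity
        omega
      exact_mod_cast this
    have hpow_succ : (K : ℝ) ^ M = x * K := by
      rw [hx, ← pow_succ]
      congr 1
      omega
    have hexp_le : x * Real.log (K.factorial)
        - (L : ℝ) * Real.log b * d ≤ -η * x := by
      have h1 : (K ^ M : ℝ) * Real.log b * d ≤ (L : ℝ) * Real.log b * d := by
        apply mul_le_mul_of_nonneg_right (mul_le_mul_of_nonneg_right hLge hlogb.le) hd0.le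
      have h2 : (K ^ M : ℝ) * Real.log b * d = x * (d * (K * Real.log b)) := by
        rw [hpow_succ]; ring
      nlinarith [hx0]
    have hmono := Real.exp_le_exp.mpr hexp_le
    -- x * exp (-η x) ≤ (2/η) exp (-(η/2) x)
    have hxe : x * Real.exp (-η * x) ≤ (2 / η) * Real.exp (-(η / 2) * x) := by
      have ht : η / 2 * x ≤ Real.exp (η / 2 * x) := by
        have := Real.add_one_le_exp (η / 2 * x)
        linarith
      have hx_le : x ≤ (2 / η) * Real.exp (η / 2 * x) := by
        rw [div_mul_eq_mul_div, le_div_iff₀ (by positivity)]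
        calc x * η = 2 * (η / 2 * x) := by ring
          _ ≤ 2 * Real.exp (η / 2 * x) := by linarith
      calc x * Real.exp (-η * x) ≤ (2 / η) * Real.exp (η / 2 * x) * Real.exp (-η * x) := by
            apply mul_le_mul_of_nonneg_right hx_le (Real.exp_nonneg _)
        _ = (2 / η) * Real.exp (-(η / 2) * x) := by
            rw [mul_assoc, ← Real.exp_add]
            congr 2
            ring
    -- exp (-(η/2) x) ≤ exp (-(η/2)) ^ M
    have hxM : (M : ℝ) ≤ x := by
      rw [hx]
      exact_mod_cast M_le_pow hk2 hM
    have hlast : Real.exp (-(η / 2) * x) ≤ Real.exp (-(η / 2)) ^ M := by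
      rw [← Real.exp_nat_mul]
      apply Real.exp_le_exp.mpr
      have : (M : ℝ) * -(η / 2) = -(η / 2) * M := by ring
      rw [this]
      apply mul_le_mul_of_nonpos_left hxM (by linarith)
    calc g M = x * Real.exp (x * Real.log (K.factorial)
          - (L : ℝ) * Real.log b * d) := hgM
      _ ≤ x * Real.exp (-η * x) := by
          apply mul_le_mul_of_nonneg_left hmono hx0.le
      _ ≤ (2 / η) * Real.exp (-(η / 2) * x) := hxe
      _ ≤ (2 / η) * (Real.exp (-(η / 2))) ^ M := by
          apply mul_le_mul_of_nonneg_left hlast (by positivity)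
  -- conclude summability
  have hr1 : Real.exp (-(η / 2)) < 1 := by
    rw [Real.exp_lt_one_iff]
    linarith
  have hgeo : Summable (fun M : ℕ => (2 / η) * (Real.exp (-(η / 2))) ^ M) :=
    (summable_geometric_of_lt_one (Real.exp_nonneg _) hr1).mul_left _
  rw [← summable_nat_add_iff 1]
  apply Summable.of_nonneg_of_le
  · intro i
    apply mul_nonneg (by positivity)
    exact Real.rpow_nonneg (by positivity) d
  · intro i
    exact hbound (i + 1) (by omega)
  · exact hgeo.comp_injective (add_left_injective 1)


end DBAux

namespace DBAux

open scoped Classical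

lemma dbPrefix_congr {A : Finset ℕ} {n : ℕ} {ω ω' : ℕ → ℕ}
    (h : ∀ i < A.card ^ n + n - 1, ω i = ω' i) (hdb : dbPrefix A n ω) : dbPrefix A n ω' := by
  intro v hv
  obtain ⟨j, ⟨hj1, hj2⟩, huniq⟩ := hdb v hv
  refine ⟨j, ⟨hj1, fun i hi => ?_⟩, ?_⟩
  · rw [← h (j + i) (by omega)]; exact hj2 i hi
  · rintro y ⟨hy1, hy2⟩
    refine huniq y ⟨hy1, fun i hi => ?_⟩
    rw [h (y + i) (by omega)]; exact hy2 i hi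

lemma diam_cyl {b l : ℕ} (ω : ℕ → ℕ) :
    EMetric.diam (cyl b l ω) = ENNReal.ofReal (((b : ℝ)⁻¹) ^ l) := by
  rw [cyl, EMetric.diam, Real.ediam_Icc]
  congr 1
  ring

/-- the cover of level `n` -/
noncomputable def cover (b : ℕ) (A : Finset ℕ) (n : ℕ)
    (p : (m : ℕ) × (Fin (A.card ^ (n + 1 + m) + (n + 1 + m) - 1) → Fin b)) : Set ℝ :=
  if isDBW A (n + 1 + p.1) (wext p.2) then
    cyl b (A.card ^ (n + 1 + p.1) + (n + 1 + p.1) - 1) (wext p.2) else ∅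

/-- bound term for level `M` -/
noncomputable def covBound (b : ℕ) (A : Finset ℕ) (d : ℝ) (M : ℕ) : ENNReal :=
  ENNReal.ofReal
    (((A.card ^ (M - 1) * (A.card.factorial) ^ (A.card ^ (M - 1)) : ℕ) : ℝ)
      * ((b : ℝ)⁻¹ ^ (A.card ^ M + M - 1)) ^ d)

lemma diam_cover_le {b : ℕ} (hb : 2 ≤ b) {A : Finset ℕ} (hk2 : 2 ≤ A.card) (n : ℕ)
    (p : (m : ℕ) × (Fin (A.card ^ (n + 1 + m) + (n + 1 + m) - 1) → Fin b)) :
    EMetric.diam (cover b A n p) ≤ ENNReal.ofReal (((2 : ℝ)⁻¹) ^ n) := by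
  rw [cover]
  split_ifs with h
  · rw [diam_cyl]
    apply ENNReal.ofReal_le_ofReal
    set M := n + 1 + p.1 with hM
    set L := A.card ^ M + M - 1 with hL
    have hb0 : (0 : ℝ) < b := by positivity
    have hnL : n ≤ L := by
      have : 0 < A.card ^ M := by positivity
      omega
    calc ((b : ℝ)⁻¹) ^ L ≤ ((2 : ℝ)⁻¹) ^ L := by
          apply pow_le_pow_left₀ (by positivity)
          apply inv_anti₀ (by norm_num)
          exact_mod_cast hb
      _ ≤ ((2 : ℝ)⁻¹) ^ n := by
          apply pow_le_pow_of_le_one (by norm_num) (by norm_num) hnL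
  · simp [EMetric.diam]

lemma cover_subset {b : ℕ} (hb : 2 ≤ b) {A : Finset ℕ} (hAb : A ⊆ Finset.range b)
    (hk2 : 2 ≤ A.card) (n : ℕ) :
    {x : ℝ | ∃ ω : ℕ → ℕ, (∀ i, ω i ∈ A) ∧ InfinitelyDeBruijn A ω ∧ x = baseVal b ω}
      ⊆ ⋃ p, cover b A n p := by
  rintro x ⟨ω, hωA, hinf, rfl⟩
  have hωb : ∀ i, ω i < b := fun i => Finset.mem_range.mp (hAb (hωA i))
  obtain ⟨M, hM, hMn⟩ := hinf.exists_gt n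
  obtain ⟨m, rfl⟩ : ∃ m, M = n + 1 + m := ⟨M - n - 1, by omega⟩
  set L := A.card ^ (n + 1 + m) + (n + 1 + m) - 1 with hL
  refine Set.mem_iUnion.mpr ⟨⟨m, fun i : Fin L => (⟨ω i, hωb i⟩ : Fin b)⟩, ?_⟩
  set w : Fin L → Fin b := fun i => (⟨ω i, hωb i⟩ : Fin b) with hw
  have hagree : ∀ i < L, wext w i = ω i := by
    intro i hi
    simp [wext, dif_pos hi, hw]
  have hdb : isDBW A (n + 1 + m) (wext w) :=
    ⟨fun i hi => by rw [hagree i hi]; exact hωA i,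
     dbPrefix_congr (fun i hi => (hagree i hi).symm) hM.2⟩
  show baseVal b ω ∈ cover b A n ⟨m, w⟩
  rw [cover, if_pos hdb]
  have hcyl : cyl b L (wext w) = cyl b L ω := by
    rw [cyl, cyl, cval_congr (fun i hi => hagree i hi)]
  show baseVal b ω ∈ cyl b L (wext w)
  rw [hcyl]
  exact baseVal_mem_cyl hb hωb L

lemma cover_sum_le {b : ℕ} (hb : 2 ≤ b) {A : Finset ℕ} (hk2 : 2 ≤ A.card) {d : ℝ}
    (hd0 : 0 < d) (n m : ℕ) :
    (∑' w : Fin (A.card ^ (n + 1 + m) + (n + 1 + m) - 1) → Fin b,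
      EMetric.diam (cover b A n ⟨m, w⟩) ^ d) ≤ covBound b A d (n + 1 + m) := by
  rw [tsum_fintype]
  set M := n + 1 + m with hM
  set L := A.card ^ M + M - 1 with hL
  have hstep : ∀ w : Fin L → Fin b, EMetric.diam (cover b A n ⟨m, w⟩) ^ d
      ≤ if isDBW A M (wext w) then ENNReal.ofReal (((b : ℝ)⁻¹) ^ L) ^ d else 0 := by
    intro w
    rw [cover]
    split_ifs with h
    · rw [diam_cyl]
    · simp only [EMetric.diam, Metric.ediam_empty]
      rw [ENNReal.zero_rpow_of_pos hd0]
  calc (∑ w : Fin L → Fin b, EMetric.diam (cover b A n ⟨m, w⟩) ^ d)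
      ≤ ∑ w : Fin L → Fin b,
          (if isDBW A M (wext w) then ENNReal.ofReal (((b : ℝ)⁻¹) ^ L) ^ d else 0) :=
        Finset.sum_le_sum fun w _ => hstep w
    _ = (Finset.univ.filter (fun w : Fin L → Fin b => isDBW A M (wext w))).card
          • (ENNReal.ofReal (((b : ℝ)⁻¹) ^ L) ^ d) := by
        rw [← Finset.sum_filter, Finset.sum_const]
    _ ≤ (A.card ^ (M - 1) * (A.card.factorial) ^ (A.card ^ (M - 1)) : ℕ)
          • (ENNReal.ofReal (((b : ℝ)⁻¹) ^ L) ^ d) := by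
        apply smul_le_smul_of_nonneg_right ?_ zero_le
        · have h1 : (Finset.univ.filter (fun w : Fin L → Fin b => isDBW A M (wext w))).card
              = Nat.card {w : Fin L → Fin b // isDBW A M (wext w)} := by
            rw [Nat.card_eq_fintype_card, Fintype.card_subtype]
          rw [h1, hL, hM]
          exact count_le hk2 (by omega) b
    _ = covBound b A d M := by
        rw [covBound, nsmul_eq_mul]
        have hppos : (0 : ℝ) < ((b : ℝ)⁻¹) ^ L := by positivity
        rw [ENNReal.ofReal_mul (by positivity), ENNReal.ofReal_rpow_of_pos hppos,
          ENNReal.ofReal_natCast]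

end DBAux
namespace DBAux

open MeasureTheory Filter Topology in
lemma hausdorff_zero (b : ℕ) (hb : 2 ≤ b) (A : Finset ℕ) (hAb : A ⊆ Finset.range b)
    (hk2 : 2 ≤ A.card) {d : ℝ}
    (hd : Real.log (A.card.factorial) / (A.card * Real.log b) < d) :
    μH[d] {x : ℝ | ∃ ω : ℕ → ℕ, (∀ i, ω i ∈ A) ∧ InfinitelyDeBruijn A ω ∧
      x = baseVal b ω} = 0 := by
  have hlogb : 0 < Real.log b := Real.log_pos (by exact_mod_cast hb.trans_lt' one_lt_two)
  have hlogf : 0 < Real.log (A.card.factorial) := by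
    apply Real.log_pos
    exact_mod_cast Nat.one_lt_factorial.mpr hk2
  have hKR : (0 : ℝ) < A.card := by positivity
  have hd0 : 0 < d := lt_trans (by positivity) hd
  -- summability of the bounding series
  set g : ℕ → ℝ := fun M =>
      ((A.card ^ (M - 1) * (A.card.factorial) ^ (A.card ^ (M - 1)) : ℕ) : ℝ)
        * ((b : ℝ)⁻¹ ^ (A.card ^ M + M - 1)) ^ d with hgdef
  have hgnn : ∀ M, 0 ≤ g M := by
    intro M
    apply mul_nonneg (by positivity)
    exact Real.rpow_nonneg (by positivity) d
  have hsumm : Summable g := summable_g hk2 hb hd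
  have hcb : ∀ M, covBound b A d M = ENNReal.ofReal (g M) := fun M => rfl
  have htsum : (∑' M, covBound b A d M) ≠ ⊤ := by
    simp only [hcb]
    rw [← ENNReal.ofReal_tsum_of_nonneg hgnn hsumm]
    exact ENNReal.ofReal_ne_top
  -- diameters tend to zero
  have hr : Tendsto (fun n : ℕ => ENNReal.ofReal ((2 : ℝ)⁻¹ ^ n)) atTop (𝓝 0) := by
    have h1 : Tendsto (fun n : ℕ => ((2 : ℝ)⁻¹) ^ n) atTop (𝓝 0) :=
      tendsto_pow_atTop_nhds_zero_of_lt_one (by norm_num) (by norm_num)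
    have h2 := ENNReal.tendsto_ofReal h1
    simpa using h2
  have key := MeasureTheory.Measure.hausdorffMeasure_le_liminf_tsum d
    {x : ℝ | ∃ ω : ℕ → ℕ, (∀ i, ω i ∈ A) ∧ InfinitelyDeBruijn A ω ∧ x = baseVal b ω}
    (fun n => ENNReal.ofReal ((2 : ℝ)⁻¹ ^ n)) hr (cover b A)
    (Eventually.of_forall (fun n i => diam_cover_le hb hk2 n i))
    (Eventually.of_forall (cover_subset hb hAb hk2))
  have hlev : ∀ n : ℕ, (∑' i, EMetric.diam (cover b A n i) ^ d)
      ≤ ∑' m, covBound b A d (n + 1 + m) := by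
    intro n
    rw [ENNReal.tsum_sigma']
    exact ENNReal.tsum_le_tsum (fun m => cover_sum_le hb hk2 hd0 n m)
  have htail : Tendsto (fun n : ℕ => ∑' m, covBound b A d (n + 1 + m)) atTop (𝓝 0) := by
    have h0 := ENNReal.tendsto_sum_nat_add (fun M => covBound b A d M) htsum
    have hcomp := h0.comp (Filter.tendsto_add_atTop_nat 1)
    have heq : (fun n : ℕ => ∑' m, covBound b A d (n + 1 + m))
        = fun n : ℕ => ∑' m, covBound b A d (m + (n + 1)) := by
      funext n
      exact tsum_congr (fun m => by rw [Nat.add_comm])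
    rw [heq]
    exact hcomp
  have h1 : Filter.liminf (fun n => ∑' i, EMetric.diam (cover b A n i) ^ d) atTop
      ≤ Filter.liminf (fun n : ℕ => ∑' m, covBound b A d (n + 1 + m)) atTop :=
    Filter.liminf_le_liminf (Eventually.of_forall hlev)
  have h2 : Filter.liminf (fun n : ℕ => ∑' m, covBound b A d (n + 1 + m)) atTop = 0 :=
    htail.liminf_eq
  exact le_antisymm (key.trans (h1.trans_eq h2)) zero_le

end DBAux
/-- Theorem (upper bound): the set `S'` of points of `F` with at least one infinitely
de Bruijn base-`b` expansion has Hausdorff dimension at most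
`log(k!)/(k log b) = (log(k!)/(k log k))·δ`, which is strictly less than `δ`. -/
theorem statement1 (b : ℕ) (hb : 2 ≤ b) (A : Finset ℕ) (hAb : A ⊆ Finset.range b)
    (k : ℕ) (hk : k = A.card) (hk2 : 2 ≤ k)
    (δ : ℝ) (hδ : δ = Real.log k / Real.log b)
    (S' : Set ℝ)
    (hS' : S' = {x : ℝ | ∃ ω : ℕ → ℕ, (∀ i, ω i ∈ A) ∧ InfinitelyDeBruijn A ω ∧
      x = baseVal b ω}) :
    dimH S' ≤ ENNReal.ofReal (Real.log (Nat.factorial k) / (k * Real.log b)) ∧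
      Real.log (Nat.factorial k) / (k * Real.log b)
        = Real.log (Nat.factorial k) / (k * Real.log k) * δ ∧
      Real.log (Nat.factorial k) / (k * Real.log b) < δ := by
  subst hk hδ hS'
  obtain ⟨heq, hlt⟩ := DBAux.parts23 hb hk2
  refine ⟨?_, heq, hlt⟩
  apply dimH_le
  intro d' hd'
  by_contra hcon
  push_neg at hcon
  set d0 := Real.log (Nat.factorial A.card) / (A.card * Real.log b) with hd0
  have hlogb : 0 < Real.log b := Real.log_pos (by exact_mod_cast hb.trans_lt' one_lt_two)
  have hlogf : 0 < Real.log (A.card.factorial) := by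
    apply Real.log_pos
    exact_mod_cast Nat.one_lt_factorial.mpr hk2
  have hd0nn : 0 ≤ d0 := by positivity
  have hlt2 : d0 < (d' : ℝ) := by
    rw [ENNReal.ofReal] at hcon
    rw [ENNReal.coe_lt_coe] at hcon
    have := hcon
    rw [← Real.coe_toNNReal d0 hd0nn]
    exact_mod_cast this
  have hzero := DBAux.hausdorff_zero b hb A hAb hk2 hlt2
  rw [hd'] at hzero
  exact ENNReal.top_ne_zero hzero
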